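/- Let W = W(A,T,φ) be a simple generalized Witt algebra over a field F of characteristic 0 (so A ≠ 0 and φ is nondegenerate), and suppose in addition that the abelian group A is finitely generated. Then every 2-local automorphism of W (no invertibility assumed) is a Lie algebra automorphism of W. -/

import Mathlib

/-! Generalized Witt algebras `W(A,T,φ)` over a field `F` of characteristic `0`,
following Djokovic-Zhao. Here `A` is an (additive) abelian group, `T` an
`F`-vector space, and `φ : T × A → F` is `F`-linear in the first variable and
additive in the second (encoded as `φ : T →ₗ[F] (A →+ F)`). -/

namespace GW

variable {F : Type*} [Field F]
variable {A : Type*} [AddCommGroup A]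
variable {T : Type*} [AddCommGroup T] [Module F T]
variable (φ : T →ₗ[F] (A →+ F))

/-- The bracket on finitely supported functions `A →₀ T`: the bilinear extension of
`[t^α a, t^β b] = t^(α+β) (φ a β • b - φ b α • a)`. -/
noncomputable def brk (x y : A →₀ T) : A →₀ T :=
  x.sum fun α a => y.sum fun β b => Finsupp.single (α + β) (φ a β • b - φ b α • a)

lemma brk_zero_left (y : A →₀ T) : brk φ 0 y = 0 := by
  simp [brk]

lemma brk_zero_right (x : A →₀ T) : brk φ x 0 = 0 := by
  simp [brk]

lemma brk_single_single (α β : A) (a b : T) :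
    brk φ (Finsupp.single α a) (Finsupp.single β b)
      = Finsupp.single (α + β) (φ a β • b - φ b α • a) := by
  unfold brk
  rw [Finsupp.sum_single_index, Finsupp.sum_single_index]
  · simp
  · simp

lemma brk_add_left (x x' y : A →₀ T) : brk φ (x + x') y = brk φ x y + brk φ x' y := by
  unfold brk
  rw [Finsupp.sum_add_index']
  · intro α; simp
  · intro α a a'
    rw [← Finsupp.sum_add]
    congr 1
    funext β b
    rw [← Finsupp.single_add]
    congr 1
    simp only [map_add, LinearMap.add_apply, AddMonoidHom.add_apply, add_smul, smul_add]
    abel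

lemma brk_add_right (x y y' : A →₀ T) : brk φ x (y + y') = brk φ x y + brk φ x y' := by
  unfold brk
  rw [← Finsupp.sum_add]
  congr 1
  funext α a
  rw [Finsupp.sum_add_index']
  · intro β; simp
  · intro β b b'
    rw [← Finsupp.single_add]
    congr 1
    simp only [map_add, LinearMap.add_apply, AddMonoidHom.add_apply, add_smul, smul_add]
    abel

lemma brk_neg_swap (x y : A →₀ T) : brk φ y x = - brk φ x y := by
  unfold brk
  rw [Finsupp.sum_comm]
  rw [← Finsupp.sum_neg]
  congr 1
  funext α a
  rw [← Finsupp.sum_neg]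
  congr 1
  funext β b
  rw [← Finsupp.single_neg, add_comm β α]
  congr 1
  abel

lemma brk_smul_right (c : F) (x y : A →₀ T) : brk φ x (c • y) = c • brk φ x y := by
  unfold brk
  rw [Finsupp.smul_sum]
  congr 1
  funext α a
  rw [Finsupp.sum_smul_index', Finsupp.smul_sum]
  · congr 1
    funext β b
    rw [Finsupp.smul_single]
    congr 1
    simp only [map_smul, LinearMap.smul_apply, AddMonoidHom.smul_apply, smul_sub, smul_smul,
      smul_eq_mul]
    rw [mul_comm]
  · intro β; simp

lemma brk_self [CharZero F] (x : A →₀ T) : brk φ x x = 0 := by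
  have h : brk φ x x = -brk φ x x := brk_neg_swap φ x x
  have h2 : (2 : F) • brk φ x x = 0 := by
    rw [two_smul]
    nth_rewrite 2 [h]
    simp
  calc brk φ x x = (2 : F)⁻¹ • ((2 : F) • brk φ x x) :=
        (inv_smul_smul₀ two_ne_zero _).symm
    _ = 0 := by rw [h2, smul_zero]

lemma brk_leibniz (x y z : A →₀ T) :
    brk φ x (brk φ y z) = brk φ (brk φ x y) z + brk φ y (brk φ x z) := by
  induction x using Finsupp.induction_linear with
  | zero => simp [brk_zero_left, brk_zero_right]
  | add f g hf hg =>
      simp only [brk_add_left, brk_add_right, hf, hg]; abel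
  | single α a =>
    induction y using Finsupp.induction_linear with
    | zero => simp [brk_zero_left, brk_zero_right]
    | add f g hf hg =>
        simp only [brk_add_left, brk_add_right, hf, hg]; abel
    | single β b =>
      induction z using Finsupp.induction_linear with
      | zero => simp [brk_zero_left, brk_zero_right]
      | add f g hf hg =>
          simp only [brk_add_left, brk_add_right, hf, hg]; abel
      | single γ c =>
        rw [brk_single_single, brk_single_single, brk_single_single, brk_single_single,
          brk_single_single, brk_single_single]
        rw [show β + (α + γ) = α + β + γ by abel, show α + (β + γ) = α + β + γ by abel,
          ← Finsupp.single_add]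
        congr 1
        simp only [map_add, map_sub, map_smul, LinearMap.sub_apply, LinearMap.smul_apply,
          AddMonoidHom.add_apply, AddMonoidHom.sub_apply, AddMonoidHom.smul_apply,
          smul_eq_mul, smul_sub, sub_smul, add_smul, smul_smul]
        ring_nf
        module

variable (F A T) in
/-- The carrier of the generalized Witt algebra `W(A,T,φ)`: finitely supported
functions from `A` to `T`, where `t^α ∂` corresponds to the function supported
at `α` with value `∂`. -/
@[nolint unusedArguments]
def W (_φ : T →ₗ[F] (A →+ F)) : Type _ := A →₀ T

noncomputable instance : AddCommGroup (W F A T φ) := inferInstanceAs (AddCommGroup (A →₀ T))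

noncomputable instance : Module F (W F A T φ) := inferInstanceAs (Module F (A →₀ T))

/-- The element `t^α ∂` of the generalized Witt algebra. -/
noncomputable def tt (α : A) (d : T) : W F A T φ := Finsupp.single α d

/-- The underlying finitely supported function of an element of `W(A,T,φ)`. -/
def toF (x : W F A T φ) : A →₀ T := x

/-- The Lie ring structure on the generalized Witt algebra `W(A,T,φ)`, with bracket
determined by `[t^α ∂, t^β ∂'] = t^(α+β) (φ(∂,β) • ∂' - φ(∂',α) • ∂)`. -/
noncomputable instance [CharZero F] : LieRing (W F A T φ) :=
  { (inferInstance : AddCommGroup (A →₀ T)) with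
    bracket := fun x y => brk φ (toF φ x) (toF φ y)
    add_lie := fun x y z => brk_add_left φ x y z
    lie_add := fun x y z => brk_add_right φ x y z
    lie_self := fun x => brk_self φ x
    leibniz_lie := fun x y z => brk_leibniz φ x y z }

/-- The generalized Witt algebra `W(A,T,φ)` as a Lie algebra over `F`. -/
noncomputable instance [CharZero F] : LieAlgebra F (W F A T φ) :=
  { (inferInstance : Module F (A →₀ T)) with
    lie_smul := fun c x y => brk_smul_right φ c x y }

@[simp] theorem bracket_tt [CharZero F] (α β : A) (a b : T) :
    ⁅tt φ α a, tt φ β b⁆ = tt φ (α + β) (φ a β • b - φ b α • a) :=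
  brk_single_single φ α β a b

/-- Nondegeneracy of the map `φ`. -/
def Nondeg : Prop :=
  (∀ α : A, (∀ d : T, φ d α = 0) → α = 0) ∧ (∀ d : T, (∀ α : A, φ d α = 0) → d = 0)

/-- `(A', T')` is a nondegenerate pair for `φ`. -/
def NondegPair (A' : AddSubgroup A) (T' : Submodule F T) : Prop :=
  (∀ d ∈ T', (∀ α ∈ A', φ d α = 0) → d = 0) ∧
  (∀ α ∈ A', (∀ d ∈ T', φ d α = 0) → α = 0)

/-- The subset (in fact Lie subalgebra) of `W(A,T,φ)` consisting of the finitely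
supported functions supported in `A'` with values in `T'`. -/
def supportedIn (A' : AddSubgroup A) (T' : Submodule F T) : Set (W F A T φ) :=
  {x | (∀ α : A, toF φ x α ∈ T') ∧ ∀ α : A, α ∉ A' → toF φ x α = 0}

end GW

namespace GW

section Aux

open Finsupp

variable {F : Type*} [Field F] [CharZero F]
variable {A : Type*} [AddCommGroup A]
variable {T : Type*} [AddCommGroup T] [Module F T]
variable (φ : T →ₗ[F] (A →+ F))

open scoped Classical in
lemma brk_apply (x y : A →₀ T) (δ : A) :
    brk φ x y δ = ∑ α ∈ x.support, ∑ β ∈ y.support,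
      if α + β = δ then φ (x α) β • y β - φ (y β) α • x α else 0 := by
  classical
  unfold brk
  rw [Finsupp.sum_apply]
  rw [Finsupp.sum]
  refine Finset.sum_congr rfl fun α _ => ?_
  rw [Finsupp.sum_apply]
  rw [Finsupp.sum]
  refine Finset.sum_congr rfl fun β _ => ?_
  rw [Finsupp.single_apply]

lemma support_brk_subset (x y : A →₀ T) {δ : A} (hδ : δ ∈ (brk φ x y).support) :
    ∃ α ∈ x.support, ∃ β ∈ y.support, δ = α + β := by
  classical
  by_contra h
  push_neg at h
  refine Finsupp.mem_support_iff.mp hδ ?_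
  rw [brk_apply]
  refine Finset.sum_eq_zero fun α hα => Finset.sum_eq_zero fun β hβ => ?_
  exact if_neg fun hc => (h α hα β hβ) hc.symm

lemma brk_single_zero_apply (d : T) (y : A →₀ T) (γ : A) :
    brk φ (Finsupp.single 0 d) y γ = φ d γ • y γ := by
  classical
  unfold brk
  rw [Finsupp.sum_single_index (by simp)]
  have h1 : (y.sum fun β b => Finsupp.single (0 + β) (φ d β • b - φ b 0 • d))
      = y.sum fun β b => Finsupp.single β (φ d β • b) := by
    refine Finsupp.sum_congr fun β _ => by simp
  rw [h1, Finsupp.sum_apply, Finsupp.sum]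
  have h2 : ∀ β ∈ y.support, Finsupp.single β (φ d β • y β) γ
      = if β = γ then φ d β • y β else 0 := fun β _ => Finsupp.single_apply
  rw [Finset.sum_congr rfl h2, Finset.sum_ite_eq' y.support γ fun β => φ d β • y β]
  by_cases hγ : γ ∈ y.support
  · rw [if_pos hγ]
  · rw [if_neg hγ, Finsupp.notMem_support_iff.mp hγ, smul_zero]

lemma brk_single_zero_single (d : T) (β : A) (v : T) :
    brk φ (Finsupp.single 0 d) (Finsupp.single β v) = φ d β • Finsupp.single β v := by
  rw [brk_single_single]
  simp

/-- Avoidance of finitely many nonzero functionals over an infinite field. -/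
lemma exists_forall_ne_zero {K : Type*} [Field K] [Infinite K]
    {M : Type*} [AddCommGroup M] [Module K M]
    (s : Finset (M →ₗ[K] K)) (hs : ∀ l ∈ s, ∃ v, l v ≠ 0) :
    ∃ x : M, ∀ l ∈ s, l x ≠ 0 := by
  classical
  induction s using Finset.induction_on with
  | empty => exact ⟨0, by simp⟩
  | @insert l₀ s' hl₀ ih =>
    obtain ⟨x, hx⟩ := ih fun l hl => hs l (Finset.mem_insert_of_mem hl)
    obtain ⟨v, hv⟩ := hs l₀ (Finset.mem_insert_self l₀ s')
    obtain ⟨c, hc⟩ := Infinite.exists_notMem_finset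
      ((insert l₀ s').image fun l => -(l x)/(l v))
    refine ⟨x + c • v, fun l hl => ?_⟩
    have hnb : c ≠ -(l x)/(l v) := fun h => hc (Finset.mem_image.mpr ⟨l, hl, h.symm⟩)
    by_cases hlv : l v = 0
    · have hls : l ∈ s' := by
        rcases Finset.mem_insert.mp hl with h | h
        · exact absurd (h ▸ hlv) hv
        · exact h
      simpa [hlv] using hx l hls
    · intro hzero
      rw [map_add, map_smul, smul_eq_mul] at hzero
      exact hnb (by rw [eq_div_iff hlv]; linear_combination hzero)

/-- The evaluation functional `d ↦ φ d v`. -/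
def evφ (v : A) : T →ₗ[F] F where
  toFun d := φ d v
  map_add' a b := by simp
  map_smul' c a := by simp

@[simp] lemma evφ_apply (v : A) (d : T) : evφ φ v d = φ d v := rfl

lemma exists_good_d (hφ : Nondeg φ) (V : Finset A) (hV : ∀ v ∈ V, v ≠ 0) :
    ∃ d : T, ∀ v ∈ V, φ d v ≠ 0 := by
  classical
  have hside : ∀ l ∈ V.image (evφ φ), ∃ v, l v ≠ 0 := by
    rintro l hl
    obtain ⟨v, hv, rfl⟩ := Finset.mem_image.mp hl
    have h1 : v ≠ 0 := hV v hv
    by_contra h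
    push_neg at h
    exact h1 (hφ.1 v fun d => h d)
  obtain ⟨d, hd⟩ := exists_forall_ne_zero (V.image (evφ φ)) hside
  exact ⟨d, fun v hv => hd (evφ φ v) (Finset.mem_image_of_mem _ hv)⟩

lemma torsionfree (hφ : Nondeg φ) : ∀ (n : ℤ) (a : A), n • a = 0 → n = 0 ∨ a = 0 := by
  intro n a hna
  by_cases hn : n = 0
  · exact Or.inl hn
  · refine Or.inr (hφ.1 a fun d => ?_)
    have : φ d (n • a) = 0 := by rw [hna]; simp
    rw [AddMonoidHom.map_zsmul, zsmul_eq_mul] at this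
    rcases mul_eq_zero.mp this with h | h
    · exact absurd (Int.cast_eq_zero.mp h) hn
    · exact h


section Ell

variable {A : Type*} [AddCommGroup A] [AddGroup.FG A]

lemma exists_ell (htf : ∀ (n : ℤ) (a : A), n • a = 0 → n = 0 ∨ a = 0)
    (V : Finset A) (hV : ∀ v ∈ V, v ≠ 0) :
    ∃ ℓ : A →+ ℚ, ∀ v ∈ V, ℓ v ≠ 0 := by
  classical
  haveI : NoZeroSMulDivisors ℤ A := ⟨fun {n a} h => htf n a h⟩
  haveI : Module.Finite ℤ A := Module.Finite.iff_addGroup_fg.mpr ‹_›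
  haveI : Module.Free ℤ A := Module.free_of_finite_type_torsion_free'
  set I := Module.Free.ChooseBasisIndex ℤ A with hI
  set b : Module.Basis I ℤ A := Module.Free.chooseBasis ℤ A with hb
  let L : A → ((I → ℚ) →ₗ[ℚ] ℚ) := fun v =>
    { toFun := fun u => ∑ i, ((b.repr v i : ℤ) : ℚ) * u i
      map_add' := fun u u' => by
        simp [mul_add, Finset.sum_add_distrib]
      map_smul' := fun c u => by
        simp [Finset.mul_sum, mul_left_comm] }
  have hs : ∀ l ∈ V.image L, ∃ u, l u ≠ 0 := by
    rintro l hl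
    obtain ⟨v, hv, rfl⟩ := Finset.mem_image.mp hl
    have hv0 : v ≠ 0 := hV v hv
    have hrepr : b.repr v ≠ 0 := fun h => hv0 (by
      have := congrArg b.repr.symm h
      simpa using this)
    obtain ⟨i₀, hi₀⟩ := Finsupp.ne_iff.mp hrepr
    refine ⟨Pi.single i₀ 1, ?_⟩
    have : (L v) (Pi.single i₀ 1) = ((b.repr v i₀ : ℤ) : ℚ) := by
      simp [L, Pi.single_apply, Finset.sum_ite_eq']
    rw [this]
    exact_mod_cast fun h => hi₀ (by exact_mod_cast h)
  obtain ⟨u, hu⟩ := exists_forall_ne_zero (V.image L) hs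
  refine ⟨{ toFun := fun a => ∑ i, ((b.repr a i : ℤ) : ℚ) * u i
            map_zero' := by simp
            map_add' := fun a a' => by
              simp [map_add, add_mul, Finset.sum_add_distrib] }, fun v hv => ?_⟩
  exact hu (L v) (Finset.mem_image_of_mem _ hv)

end Ell


noncomputable def adIter (x y : A →₀ T) : ℕ → (A →₀ T)
  | 0 => y
  | k+1 => brk φ x (adIter x y k)

def IsLF (x : A →₀ T) : Prop :=
  ∀ y : A →₀ T, ∃ V : Submodule F (A →₀ T), V.FG ∧ ∀ k, adIter φ x y k ∈ V

lemma isLF_single_zero (d : T) : IsLF φ (Finsupp.single 0 d) := by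
  classical
  intro y
  set S : Set (A →₀ T) := (fun β => Finsupp.single β (y β)) '' ↑y.support with hS
  refine ⟨Submodule.span F S,
    ⟨y.support.image (fun β => Finsupp.single β (y β)), by rw [Finset.coe_image]⟩, ?_⟩
  have hstable : ∀ z ∈ Submodule.span F S,
      brk φ (Finsupp.single 0 d) z ∈ Submodule.span F S := by
    intro z hz
    induction hz using Submodule.span_induction with
    | mem w hw =>
      obtain ⟨β, hβ, rfl⟩ := hw
      rw [brk_single_zero_single]
      exact Submodule.smul_mem _ _ (Submodule.subset_span ⟨β, hβ, rfl⟩)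
    | zero => rw [brk_zero_right]; exact Submodule.zero_mem _
    | add a b _ _ ha hb => rw [brk_add_right]; exact Submodule.add_mem _ ha hb
    | smul c a _ ha => rw [brk_smul_right]; exact Submodule.smul_mem _ c ha
  intro k
  induction k with
  | zero =>
    show y ∈ _
    have hy : y = ∑ β ∈ y.support, Finsupp.single β (y β) := by
      conv_lhs => rw [← Finsupp.sum_single y]
      rfl
    rw [hy]
    exact Submodule.sum_mem _ fun β hβ => Submodule.subset_span ⟨β, hβ, rfl⟩
  | succ k ih => exact hstable _ ih

lemma not_isLF [AddGroup.FG A] (hφ : Nondeg φ) (x : A →₀ T) {α₀ : A}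
    (hα₀ : α₀ ∈ x.support) (hα₀0 : α₀ ≠ 0) : ¬ IsLF φ x := by
  classical
  set s := x.support with hs
  set D : Finset A := (((s ∪ {0}) ×ˢ (s ∪ {0})).image fun p => p.1 - p.2).erase 0 with hD
  obtain ⟨ℓ₁, hℓ₁⟩ := exists_ell (torsionfree φ hφ) D (fun v hv => (Finset.mem_erase.mp hv).1)
  have hD' : ∀ (ℓ' : A →+ ℚ), (∀ v ∈ D, ℓ' v ≠ 0) →
      ∀ a ∈ s ∪ {0}, ∀ a' ∈ s ∪ {0}, ℓ' a = ℓ' a' → a = a' := by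
    intro ℓ' hℓ' a ha a' ha' h
    by_contra hne
    have hmem : a - a' ∈ D := Finset.mem_erase.mpr ⟨sub_ne_zero.mpr hne,
      Finset.mem_image.mpr ⟨(a, a'), Finset.mem_product.mpr ⟨ha, ha'⟩, rfl⟩⟩
    exact hℓ' _ hmem (by rw [map_sub, h, sub_self])
  obtain ⟨μ₁, hμ₁s, hμ₁max⟩ := s.exists_max_image (fun a => |ℓ₁ a|) ⟨α₀, hα₀⟩
  have hα₀ne : ℓ₁ α₀ ≠ 0 := by
    have h0 : (0 : A) ∈ s ∪ {0} := Finset.mem_union_right _ (Finset.mem_singleton_self 0)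
    have hα : α₀ ∈ s ∪ {0} := Finset.mem_union_left _ hα₀
    intro h
    exact hα₀0 (hD' ℓ₁ hℓ₁ α₀ hα 0 h0 (by rw [h, map_zero]))
  have hμ₁pos : 0 < |ℓ₁ μ₁| := lt_of_lt_of_le (abs_pos.mpr hα₀ne) (hμ₁max α₀ hα₀)
  -- normalize sign
  obtain ⟨ℓ, hℓD, hℓμpos, hℓmax⟩ :
      ∃ ℓ : A →+ ℚ, (∀ v ∈ D, ℓ v ≠ 0) ∧ 0 < ℓ μ₁ ∧ ∀ a ∈ s, |ℓ a| ≤ ℓ μ₁ := by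
    rcases le_or_gt (ℓ₁ μ₁) 0 with h | h
    · refine ⟨-ℓ₁, fun v hv => neg_ne_zero.mpr (hℓ₁ v hv), ?_, fun a ha => ?_⟩
      · simpa [abs_of_nonpos h] using hμ₁pos
      · simpa [abs_of_nonpos h] using hμ₁max a ha
    · refine ⟨ℓ₁, hℓ₁, h, fun a ha => ?_⟩
      simpa [abs_of_pos h] using hμ₁max a ha
  set μ := μ₁ with hμdef
  have hμs : μ ∈ s := hμ₁s
  have hμ0 : μ ≠ 0 := fun h => by simp [h] at hℓμpos
  have hbound : ∀ a ∈ s, ℓ a ≤ ℓ μ := fun a ha => le_trans (le_abs_self _) (hℓmax a ha)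
  have heqμ : ∀ a ∈ s, ℓ a = ℓ μ → a = μ := fun a ha h =>
    hD' ℓ hℓD a (Finset.mem_union_left _ ha) μ (Finset.mem_union_left _ hμs) h
  set dμ : T := x μ with hdμ
  have hdμ0 : dμ ≠ 0 := Finsupp.mem_support_iff.mp hμs
  obtain ⟨γ, hγ⟩ : ∃ γ, φ dμ γ ≠ 0 := by
    by_contra h
    push_neg at h
    exact hdμ0 (hφ.2 dμ h)
  set m : F := φ dμ μ with hm
  have hβex : ∃ β : A, ∀ t : ℤ, -1 ≤ t → φ dμ (β + t • μ) ≠ 0 := by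
    have hval : ∀ (r t : ℤ), φ dμ (γ + r • μ + t • μ) = φ dμ γ + (r + t) * m := by
      intro r t
      rw [map_add, map_add, AddMonoidHom.map_zsmul, AddMonoidHom.map_zsmul,
        zsmul_eq_mul, zsmul_eq_mul]
      push_cast
      ring
    by_cases hmz : m = 0
    · refine ⟨γ, fun t ht => ?_⟩
      have := hval 0 t
      simp only [zero_zsmul, zero_add, add_zero] at this ⊢
      rw [show γ + t • μ = γ + (0:ℤ) • μ + t • μ by simp, hval 0 t, hmz]
      simpa using hγ
    · by_cases hr : ∃ r : ℤ, φ dμ γ + r * m = 0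
      · obtain ⟨r₀, hr₀⟩ := hr
        refine ⟨γ + (r₀ + 2) • μ, fun t ht => ?_⟩
        rw [hval (r₀ + 2) t]
        intro h
        have h2 : ((2 + t : ℤ) : F) * m = 0 := by
          push_cast at h ⊢
          linear_combination h - hr₀
        exact (mul_ne_zero (Int.cast_ne_zero.mpr (by omega)) hmz) h2
      · push_neg at hr
        refine ⟨γ, fun t ht => ?_⟩
        rw [show γ + t • μ = γ + (0:ℤ) • μ + t • μ by simp, hval 0 t]
        simpa using hr (0 + t)
  obtain ⟨β, hβ⟩ := hβex
  set y : A →₀ T := Finsupp.single β dμ with hy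
  have hℓtop : ∀ k : ℕ, ℓ (β + (k : ℤ) • μ) = ℓ β + (k : ℚ) * ℓ μ := by
    intro k
    rw [map_add, AddMonoidHom.map_zsmul, zsmul_eq_mul]
    push_cast
    ring
  have main : ∀ k : ℕ,
      (∀ δ ∈ (adIter φ x y k).support, ℓ δ ≤ ℓ β + (k : ℚ) * ℓ μ) ∧
      ∃ c : F, c ≠ 0 ∧ (adIter φ x y k) (β + (k : ℤ) • μ) = c • dμ := by
    intro k
    induction k with
    | zero =>
      constructor
      · intro δ hδ
        have : δ = β := Finset.mem_singleton.mp (Finsupp.support_single_subset hδ)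
        simp [this]
      · exact ⟨1, one_ne_zero, by simp [adIter, hy]⟩
    | succ k ih =>
      obtain ⟨hsupp, c, hc0, hval⟩ := ih
      have hgk : β + (k : ℤ) • μ ∈ (adIter φ x y k).support :=
        Finsupp.mem_support_iff.mpr (by rw [hval]; exact smul_ne_zero hc0 hdμ0)
      constructor
      · intro δ hδ
        obtain ⟨α, hα, γ', hγ', rfl⟩ := support_brk_subset φ _ _ hδ
        have h1 : ℓ α ≤ ℓ μ := hbound α hα
        have h2 : ℓ γ' ≤ ℓ β + (k : ℚ) * ℓ μ := hsupp γ' hγ'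
        rw [map_add]
        push_cast
        linarith
      · set top := β + ((k : ℕ) + 1 : ℤ) • μ with htop
        have htop' : top = μ + (β + (k : ℤ) • μ) := by
          rw [htop]
          have : ((k : ℕ) + 1 : ℤ) • μ = (k : ℤ) • μ + μ := by
            rw [add_zsmul, one_zsmul]
          rw [this]
          abel
        have hℓδ : ℓ top = ℓ β + ((k : ℚ) + 1) * ℓ μ := by
          have h := hℓtop (k + 1)
          rw [htop, show ((k : ℕ) + 1 : ℤ) • μ = ((k + 1 : ℕ) : ℤ) • μ by norm_num, h]
          push_cast
          ring
        show ∃ c' : F, c' ≠ 0 ∧ brk φ x (adIter φ x y k) top = c' • dμ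
        rw [brk_apply]
        rw [Finset.sum_eq_single_of_mem μ hμs]
        · have hcond : ∀ γ', (μ + γ' = top) ↔ (γ' = β + (k : ℤ) • μ) := by
            intro γ'
            rw [htop']
            exact ⟨fun h => by exact add_left_cancel h, fun h => by rw [h]⟩
          have : ∑ γ' ∈ (adIter φ x y k).support,
              (if μ + γ' = top then φ (x μ) γ' • (adIter φ x y k) γ'
                - φ ((adIter φ x y k) γ') μ • x μ else 0)
              = ∑ γ' ∈ (adIter φ x y k).support,
              (if γ' = β + (k : ℤ) • μ then φ (x μ) γ' • (adIter φ x y k) γ'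
                - φ ((adIter φ x y k) γ') μ • x μ else 0) := by
            refine Finset.sum_congr rfl fun γ' _ => ?_
            rw [if_congr (hcond γ') rfl rfl]
          rw [this, Finset.sum_ite_eq' _ _ _, if_pos hgk]
          rw [hval, ← hdμ]
          have hfactor : φ dμ (β + (k : ℤ) • μ) • (c • dμ) - φ (c • dμ) μ • dμ
              = (c * φ dμ (β + ((k : ℤ) - 1) • μ)) • dμ := by
            have h1 : φ (c • dμ) μ = c * m := by
              rw [map_smul]
              simp [hm]
            have h2 : φ dμ (β + ((k : ℤ) - 1) • μ) = φ dμ (β + (k : ℤ) • μ) - m := by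
              rw [show β + ((k : ℤ) - 1) • μ = (β + (k : ℤ) • μ) - μ by
                rw [sub_zsmul, one_zsmul]; abel]
              rw [map_sub, hm]
            rw [h1, h2, smul_smul, ← sub_smul]
            congr 1
            ring
          rw [hfactor]
          exact ⟨c * φ dμ (β + ((k : ℤ) - 1) • μ),
            mul_ne_zero hc0 (hβ _ (by omega)), rfl⟩
        · intro α hα hαμ
          refine Finset.sum_eq_zero fun γ' hγ' => if_neg fun hcond => ?_
          have h1 : ℓ α < ℓ μ := lt_of_le_of_ne (hbound α hα) fun h => hαμ (heqμ α hα h)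
          have h2 : ℓ γ' ≤ ℓ β + (k : ℚ) * ℓ μ := hsupp γ' hγ'
          have h3 : ℓ α + ℓ γ' = ℓ top := by rw [← map_add, hcond]
          rw [hℓδ] at h3
          linarith
  -- contradiction
  intro hLF
  obtain ⟨Vs, ⟨t, ht⟩, hmem⟩ := hLF y
  set S : Finset A := t.biUnion Finsupp.support with hSdef
  have hSsub : ∀ v ∈ Vs, (v : A →₀ T).support ⊆ S := by
    intro v hv
    rw [← ht] at hv
    induction hv using Submodule.span_induction with
    | mem w hw => exact fun a ha => Finset.mem_biUnion.mpr ⟨w, hw, ha⟩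
    | zero => simp
    | add a b _ _ ha hb =>
      exact fun z hz => by
        rcases Finset.mem_union.mp (Finsupp.support_add hz) with h | h
        · exact ha h
        · exact hb h
    | smul c a _ ha => exact fun z hz => ha (Finsupp.support_smul hz)
  have hin : ∀ k : ℕ, β + (k : ℤ) • μ ∈ (S : Finset A) := by
    intro k
    obtain ⟨-, c, hc0, hval⟩ := main k
    refine hSsub _ (hmem k) (Finsupp.mem_support_iff.mpr ?_)
    rw [hval]
    exact smul_ne_zero hc0 hdμ0
  have hinj : Function.Injective fun k : ℕ => β + (k : ℤ) • μ := by
    intro k k' h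
    have := congrArg ℓ h
    simp only at this
    rw [hℓtop k, hℓtop k'] at this
    have hkk : (k : ℚ) = (k' : ℚ) := by
      have hmul : (k : ℚ) * ℓ μ = (k' : ℚ) * ℓ μ := by linarith
      exact mul_right_cancel₀ (ne_of_gt hℓμpos) hmul
    exact_mod_cast hkk
  have hfin : (Set.range fun k : ℕ => β + (k : ℤ) • μ).Finite :=
    Set.Finite.subset S.finite_toSet (by
      rintro a ⟨k, rfl⟩
      exact hin k)
  exact (Set.infinite_range_of_injective hinj) hfin


/-- A bracket-preserving linear automorphism that preserves the degree-zero part. -/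
structure AutData (φ : T →ₗ[F] (A →+ F)) where
  e : (A →₀ T) ≃ₗ[F] (A →₀ T)
  hmap : ∀ a b : A →₀ T, e (brk φ a b) = brk φ (e a) (e b)
  h0 : ∀ d : T, ∃ d', e (Finsupp.single 0 d) = Finsupp.single 0 d'
  h0' : ∀ d : T, ∃ d', e.symm (Finsupp.single 0 d) = Finsupp.single 0 d'

namespace AutData

variable {φ} (E : AutData φ)

/-- The action on the degree-zero part. -/
noncomputable def τ0 (d : T) : T := E.e (Finsupp.single 0 d) 0

/-- The action of the inverse on the degree-zero part. -/
noncomputable def τinv (d : T) : T := E.e.symm (Finsupp.single 0 d) 0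

lemma e_single0 (d : T) : E.e (Finsupp.single 0 d) = Finsupp.single 0 (E.τ0 d) := by
  obtain ⟨d', h⟩ := E.h0 d
  rw [h, τ0, h, Finsupp.single_eq_same]

lemma esymm_single0 (d : T) :
    E.e.symm (Finsupp.single 0 d) = Finsupp.single 0 (E.τinv d) := by
  obtain ⟨d', h⟩ := E.h0' d
  rw [h, τinv, h, Finsupp.single_eq_same]

lemma τinv_τ0 (d : T) : E.τinv (E.τ0 d) = d := by
  have h := congrArg E.e.symm (E.e_single0 d)
  rw [LinearEquiv.symm_apply_apply, E.esymm_single0] at h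
  have := congrArg (fun f : A →₀ T => f 0) h.symm
  simpa using this

lemma τ0_τinv (d : T) : E.τ0 (E.τinv d) = d := by
  have h := congrArg E.e (E.esymm_single0 d)
  rw [LinearEquiv.apply_symm_apply, E.e_single0] at h
  have := congrArg (fun f : A →₀ T => f 0) h.symm
  simpa using this

lemma eigen (α : A) (d eT : T) (γ : A) :
    φ (E.τ0 eT) γ • (E.e (Finsupp.single α d)) γ
      = φ eT α • (E.e (Finsupp.single α d)) γ := by
  have h := E.hmap (Finsupp.single 0 eT) (Finsupp.single α d)
  rw [brk_single_zero_single, map_smul, E.e_single0] at h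
  have h2 := congrArg (fun f : A →₀ T => f γ) h
  simp only [Finsupp.smul_apply] at h2
  rw [brk_single_zero_apply] at h2
  exact h2.symm

lemma eigen' (α : A) (d : T) (γ : A) (hz : (E.e (Finsupp.single α d)) γ ≠ 0) (d' : T) :
    φ d' γ = φ (E.τinv d') α := by
  have h := E.eigen α d (E.τinv d') γ
  rw [E.τ0_τinv] at h
  have h2 : (φ d' γ - φ (E.τinv d') α) • (E.e (Finsupp.single α d)) γ = 0 := by
    rw [sub_smul, h, sub_self]
  rcases smul_eq_zero.mp h2 with h3 | h3
  · exact sub_eq_zero.mp h3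
  · exact absurd h3 hz

lemma exists_sigma (hφ : Nondeg φ) {d₀ : T} (hd₀ : d₀ ≠ 0) (α : A) :
    ∃! γ : A, ∀ d' : T, φ d' γ = φ (E.τinv d') α := by
  have hz : E.e (Finsupp.single α d₀) ≠ 0 := fun h =>
    hd₀ (Finsupp.single_eq_zero.mp (E.e.injective (by rw [h, map_zero])))
  obtain ⟨γ, hγ⟩ : ∃ γ, (E.e (Finsupp.single α d₀)) γ ≠ 0 := by
    by_contra h
    push_neg at h
    exact hz (Finsupp.ext h)
  refine ⟨γ, fun d' => E.eigen' α d₀ γ hγ d', fun γ' hγ' => ?_⟩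
  have h2 := fun d' => E.eigen' α d₀ γ hγ d'
  have h3 := hφ.1 (γ' - γ) fun d => by rw [map_sub, hγ' d, h2 d, sub_self]
  exact sub_eq_zero.mp h3

/-- The induced map on degrees. -/
noncomputable def σA (hφ : Nondeg φ) {d₀ : T} (hd₀ : d₀ ≠ 0) (α : A) : A :=
  (E.exists_sigma hφ hd₀ α).exists.choose

lemma σA_spec (hφ : Nondeg φ) {d₀ : T} (hd₀ : d₀ ≠ 0) (α : A) (d' : T) :
    φ d' (E.σA hφ hd₀ α) = φ (E.τinv d') α :=
  (E.exists_sigma hφ hd₀ α).exists.choose_spec d'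

lemma σA_eq_of (hφ : Nondeg φ) {d₀ : T} (hd₀ : d₀ ≠ 0) {α γ : A}
    (h : ∀ d' : T, φ d' γ = φ (E.τinv d') α) : γ = E.σA hφ hd₀ α := by
  exact (E.exists_sigma hφ hd₀ α).unique h (fun d' => E.σA_spec hφ hd₀ α d')

lemma e_single (hφ : Nondeg φ) {d₀ : T} (hd₀ : d₀ ≠ 0) (α : A) (d : T) :
    E.e (Finsupp.single α d)
      = Finsupp.single (E.σA hφ hd₀ α) ((E.e (Finsupp.single α d)) (E.σA hφ hd₀ α)) := by
  classical
  ext γ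
  rcases eq_or_ne γ (E.σA hφ hd₀ α) with rfl | hne
  · rw [Finsupp.single_eq_same]
  · rw [Finsupp.single_eq_of_ne' (Ne.symm hne)]
    by_contra hz
    exact hne (E.σA_eq_of hφ hd₀ fun d' => E.eigen' α d γ hz d')

/-- The induced map on coefficients. -/
noncomputable def τA (hφ : Nondeg φ) {d₀ : T} (hd₀ : d₀ ≠ 0) (α : A) (d : T) : T :=
  (E.e (Finsupp.single α d)) (E.σA hφ hd₀ α)

lemma e_single' (hφ : Nondeg φ) {d₀ : T} (hd₀ : d₀ ≠ 0) (α : A) (d : T) :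
    E.e (Finsupp.single α d)
      = Finsupp.single (E.σA hφ hd₀ α) (E.τA hφ hd₀ α d) :=
  E.e_single hφ hd₀ α d

lemma σA_zero (hφ : Nondeg φ) {d₀ : T} (hd₀ : d₀ ≠ 0) : E.σA hφ hd₀ 0 = 0 :=
  (E.σA_eq_of hφ hd₀ (γ := 0) (α := 0) fun d' => by simp).symm

lemma σA_add (hφ : Nondeg φ) {d₀ : T} (hd₀ : d₀ ≠ 0) (α β : A) :
    E.σA hφ hd₀ (α + β) = E.σA hφ hd₀ α + E.σA hφ hd₀ β := by
  refine (E.σA_eq_of hφ hd₀ fun d' => ?_).symm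
  rw [map_add, E.σA_spec hφ hd₀ α d', E.σA_spec hφ hd₀ β d', ← AddMonoidHom.map_add, map_add]

lemma σA_injective (hφ : Nondeg φ) {d₀ : T} (hd₀ : d₀ ≠ 0) {α β : A}
    (h : E.σA hφ hd₀ α = E.σA hφ hd₀ β) : α = β := by
  have hk : ∀ d : T, φ d α = φ d β := by
    intro d
    have h1 := E.σA_spec hφ hd₀ α (E.τ0 d)
    have h2 := E.σA_spec hφ hd₀ β (E.τ0 d)
    rw [E.τinv_τ0] at h1 h2
    rw [← h1, ← h2, h]
  have := hφ.1 (α - β) fun d => by rw [map_sub, hk d, sub_self]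
  exact sub_eq_zero.mp this

lemma τA_zero_right (hφ : Nondeg φ) {d₀ : T} (hd₀ : d₀ ≠ 0) (α : A) :
    E.τA hφ hd₀ α 0 = 0 := by
  rw [τA, Finsupp.single_zero, map_zero, Finsupp.zero_apply]

lemma τA_sub (hφ : Nondeg φ) {d₀ : T} (hd₀ : d₀ ≠ 0) (α : A) (d d' : T) :
    E.τA hφ hd₀ α (d - d') = E.τA hφ hd₀ α d - E.τA hφ hd₀ α d' := by
  rw [τA, τA, τA, Finsupp.single_sub, map_sub, Finsupp.sub_apply]

lemma τA_smul (hφ : Nondeg φ) {d₀ : T} (hd₀ : d₀ ≠ 0) (α : A) (c : F) (d : T) :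
    E.τA hφ hd₀ α (c • d) = c • E.τA hφ hd₀ α d := by
  rw [τA, τA, ← Finsupp.smul_single, map_smul, Finsupp.smul_apply]

lemma τA_injective (hφ : Nondeg φ) {d₀ : T} (hd₀ : d₀ ≠ 0) (α : A) {d : T}
    (h : E.τA hφ hd₀ α d = 0) : d = 0 := by
  have h1 := E.e_single' hφ hd₀ α d
  rw [h, Finsupp.single_zero] at h1
  have := E.e.injective (h1.trans (map_zero E.e).symm)
  exact Finsupp.single_eq_zero.mp this

lemma τA_zero_eq_τ0 (hφ : Nondeg φ) {d₀ : T} (hd₀ : d₀ ≠ 0) (d : T) :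
    E.τA hφ hd₀ 0 d = E.τ0 d := by
  rw [τA, E.σA_zero hφ hd₀, τ0]

lemma keyE (hφ : Nondeg φ) {d₀ : T} (hd₀ : d₀ ≠ 0) (α β : A) (d d' : T) :
    E.τA hφ hd₀ (α + β) (φ d β • d' - φ d' α • d)
      = φ (E.τA hφ hd₀ α d) (E.σA hφ hd₀ β) • E.τA hφ hd₀ β d'
        - φ (E.τA hφ hd₀ β d') (E.σA hφ hd₀ α) • E.τA hφ hd₀ α d := by
  have h := E.hmap (Finsupp.single α d) (Finsupp.single β d')
  rw [brk_single_single, E.e_single' hφ hd₀, E.e_single' hφ hd₀, E.e_single' hφ hd₀,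
    brk_single_single] at h
  rw [← E.σA_add hφ hd₀ α β] at h
  have := congrArg (fun f : A →₀ T => f (E.σA hφ hd₀ (α + β))) h
  simpa using this

end AutData


lemma exists_w [AddGroup.FG A] (hφ : Nondeg φ) (hA : Nontrivial A) :
    ∃ w : A →₀ T, ∀ E : AutData φ, E.e w = w → ∀ v, E.e v = v := by
  classical
  haveI : NoZeroSMulDivisors ℤ A := ⟨fun {n a} h => torsionfree φ hφ n a h⟩
  haveI : Module.Finite ℤ A := Module.Finite.iff_addGroup_fg.mpr ‹_›
  haveI : Module.Free ℤ A := Module.free_of_finite_type_torsion_free'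
  set I := Module.Free.ChooseBasisIndex ℤ A with hI
  set b : Module.Basis I ℤ A := Module.Free.chooseBasis ℤ A with hbdef
  haveI : Nonempty I := by
    by_contra h
    haveI : IsEmpty I := not_nonempty_iff.mp h
    obtain ⟨a, a', haa⟩ := hA
    refine haa (b.repr.injective ?_)
    ext i
    exact isEmptyElim i
  obtain ⟨i₀⟩ := ‹Nonempty I›
  -- elementary basis facts
  have hb_comb : ∀ (i j : I), i ≠ j → ∀ (c₁ c₂ : ℤ), c₁ ≠ 0 → c₁ • b i + c₂ • b j ≠ 0 := by
    intro i j hij c₁ c₂ hc₁ h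
    have h2 := congrArg (fun a => b.repr a i) h
    simp only [map_add, map_smul, Module.Basis.repr_self, map_zero] at h2
    rw [Finsupp.add_apply, Finsupp.smul_apply, Finsupp.smul_apply,
      Finsupp.single_eq_same, Finsupp.single_eq_of_ne' (Ne.symm hij)] at h2
    simp only [smul_eq_mul, mul_one, mul_zero, add_zero, Finsupp.zero_apply] at h2
    exact hc₁ h2
  -- the finite set of genericity conditions
  set V : Finset A :=
    (Finset.univ.image fun i : I => b i)
    ∪ ((Finset.univ ×ˢ Finset.univ).filter (fun p : I × I => p.1 ≠ p.2)).image
        (fun p => b p.1 - b p.2)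
    ∪ ((Finset.univ ×ˢ Finset.univ).filter (fun p : I × I => p.1 ≠ p.2)).image
        (fun p => b p.1 + b p.2)
    ∪ ((Finset.univ ×ˢ Finset.univ).filter (fun p : I × I => p.1 ≠ p.2)).image
        (fun p => b p.1 - (2:ℤ) • b p.2) with hV
  have hVne : ∀ v ∈ V, v ≠ 0 := by
    intro v hv
    simp only [hV, Finset.mem_union, Finset.mem_image, Finset.mem_filter,
      Finset.mem_product, Finset.mem_univ, true_and] at hv
    rcases hv with ((⟨i, rfl⟩ | ⟨⟨i, j⟩, hij, rfl⟩) | ⟨⟨i, j⟩, hij, rfl⟩) | ⟨⟨i, j⟩, hij, rfl⟩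
    · exact b.ne_zero i
    · intro h
      exact hb_comb i j hij 1 (-1) one_ne_zero (by rw [← h]; push_cast; module)
    · intro h
      exact hb_comb i j hij 1 1 one_ne_zero (by rw [← h]; push_cast; module)
    · intro h
      exact hb_comb i j hij 1 (-2) one_ne_zero (by rw [← h]; push_cast; module)
  obtain ⟨d₀, hd₀V⟩ := exists_good_d φ hφ V hVne
  set f : A → F := fun a => φ d₀ a with hfdef
  have hfb : ∀ i, f (b i) ≠ 0 := fun i => hd₀V _ (by
    simp only [hV, Finset.mem_union]
    exact Or.inl (Or.inl (Or.inl (Finset.mem_image.mpr ⟨i, Finset.mem_univ i, rfl⟩))))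
  have hd₀ : d₀ ≠ 0 := by
    intro h
    exact hfb i₀ (by simp [hfdef, h])
  have hfzsmul : ∀ (k : ℤ) (a : A), f (k • a) = (k : F) * f a := by
    intro k a
    rw [hfdef]
    simp only
    rw [AddMonoidHom.map_zsmul, zsmul_eq_mul]
  have hf_pair : ∀ i j : I, i ≠ j →
      f (b i) ≠ f (b j) ∧ f (b i) + f (b j) ≠ 0 ∧ f (b i) ≠ 2 * f (b j) := by
    intro i j hij
    have hmemf : ∀ (v : A), v ∈ V → f v ≠ 0 := hd₀V
    have hpmem : (i, j) ∈ (Finset.univ ×ˢ Finset.univ).filter (fun p : I × I => p.1 ≠ p.2) :=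
      Finset.mem_filter.mpr ⟨Finset.mem_product.mpr ⟨Finset.mem_univ _, Finset.mem_univ _⟩, hij⟩
    have hf2j : f ((2:ℤ) • b j) = 2 * f (b j) := by rw [hfzsmul]; norm_num
    refine ⟨?_, ?_, ?_⟩
    · have h1 := hmemf (b i - b j) (by
        simp only [hV, Finset.mem_union]
        exact Or.inl (Or.inl (Or.inr (Finset.mem_image.mpr ⟨(i, j), hpmem, rfl⟩))))
      have h2 : f (b i - b j) = f (b i) - f (b j) := map_sub (φ d₀) _ _
      intro h
      exact h1 (by rw [h2, h, sub_self])
    · have h1 := hmemf (b i + b j) (by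
        simp only [hV, Finset.mem_union]
        exact Or.inl (Or.inr (Finset.mem_image.mpr ⟨(i, j), hpmem, rfl⟩)))
      have h2 : f (b i + b j) = f (b i) + f (b j) := map_add (φ d₀) _ _
      intro h
      exact h1 (by rw [h2, h])
    · have h1 := hmemf (b i - (2:ℤ) • b j) (by
        simp only [hV, Finset.mem_union]
        exact Or.inr (Finset.mem_image.mpr ⟨(i, j), hpmem, rfl⟩))
      have h2 : f (b i - (2:ℤ) • b j) = f (b i) - f ((2:ℤ) • b j) := map_sub (φ d₀) _ _
      intro h
      exact h1 (by rw [h2, hf2j, h, sub_self])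
  -- the anchor point
  set G : Finset A := Finset.univ.image (fun i : I => b i)
      ∪ Finset.univ.image (fun i : I => (2:ℤ) • b i) with hGdef
  have hGmem : ∀ g ∈ G, ∃ i : I, g = b i ∨ g = (2:ℤ) • b i := by
    intro g hg
    simp only [hGdef, Finset.mem_union, Finset.mem_image, Finset.mem_univ, true_and] at hg
    rcases hg with ⟨i, rfl⟩ | ⟨i, rfl⟩
    · exact ⟨i, Or.inl rfl⟩
    · exact ⟨i, Or.inr rfl⟩
  have hG0 : (0 : A) ∉ G := by
    intro h
    obtain ⟨i, hi | hi⟩ := hGmem 0 h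
    · exact b.ne_zero i hi.symm
    · refine hfb i ?_
      have := hfzsmul 2 (b i)
      rw [← hi] at this
      have h0 : f (0 : A) = 0 := by simp [hfdef]
      rw [h0] at this
      have h2 : ((2:ℤ) : F) ≠ 0 := by norm_num
      field_simp at this
      exact (mul_eq_zero.mp this.symm).resolve_left h2
  have hf2 : ∀ i : I, f ((2:ℤ) • b i) = 2 * f (b i) := by
    intro i
    rw [hfzsmul]
    push_cast
    ring
  have hfinjG : ∀ g ∈ G, ∀ g' ∈ G, f g = f g' → g = g' := by
    intro g hg g' hg' hfg
    obtain ⟨i, hi⟩ := hGmem g hg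
    obtain ⟨j, hj⟩ := hGmem g' hg'
    rcases eq_or_ne i j with rfl | hij
    · rcases hi with rfl | rfl <;> rcases hj with rfl | rfl
      · rfl
      · rw [hf2] at hfg
        exact absurd (by linear_combination - hfg) (hfb i)
      · rw [hf2] at hfg
        exact absurd (by linear_combination hfg) (hfb i)
      · rfl
    · exfalso
      rcases hi with rfl | rfl <;> rcases hj with rfl | rfl
      · exact (hf_pair i j hij).1 hfg
      · rw [hf2] at hfg
        exact (hf_pair i j hij).2.2 hfg
      · rw [hf2] at hfg
        exact (hf_pair j i hij.symm).2.2 hfg.symm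
      · rw [hf2, hf2] at hfg
        exact (hf_pair i j hij).1 (by linear_combination hfg / 2)
  set w : A →₀ T := Finsupp.single 0 d₀ + ∑ g ∈ G, Finsupp.single g d₀ with hwdef
  have hsum_apply : ∀ (u : I → Prop), True := fun _ => trivial
  have hw_at : ∀ a : A, w a = (if a = 0 then d₀ else 0) + (if a ∈ G then d₀ else 0) := by
    intro a
    rw [hwdef, Finsupp.add_apply, Finsupp.finset_sum_apply]
    congr 1
    · rw [Finsupp.single_apply]
      simp [eq_comm]
    · rw [Finset.sum_congr rfl (fun g _ => Finsupp.single_apply (a := g) (b := d₀) (a' := a)),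
        Finset.sum_ite_eq' G a fun _ => d₀]
  refine ⟨w, ?_⟩
  intro E hEw
  have hf : ∀ x : A, φ d₀ x = f x := fun _ => rfl
  have hσinj : ∀ a a', E.σA hφ hd₀ a = E.σA hφ hd₀ a' → a = a' :=
    fun a a' h => E.σA_injective hφ hd₀ h
  have hσ0 : E.σA hφ hd₀ 0 = 0 := E.σA_zero hφ hd₀
  have hewexp : E.e w = Finsupp.single 0 (E.τ0 d₀)
      + ∑ g ∈ G, Finsupp.single (E.σA hφ hd₀ g) (E.τA hφ hd₀ g d₀) := by
    rw [hwdef, map_add, map_sum, E.e_single0]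
    congr 1
    exact Finset.sum_congr rfl fun g _ => E.e_single' hφ hd₀ g d₀
  have hGne0 : ∀ g ∈ G, g ≠ 0 := fun g hg h => hG0 (h ▸ hg)
  have hσGne0 : ∀ g ∈ G, E.σA hφ hd₀ g ≠ 0 :=
    fun g hg h => hGne0 g hg (hσinj g 0 (by rw [h, hσ0]))
  have hτgne : ∀ (g : A) (d : T), d ≠ 0 → E.τA hφ hd₀ g d ≠ 0 :=
    fun g d hd h => hd (E.τA_injective hφ hd₀ g h)
  have hτ0d₀ : E.τ0 d₀ = d₀ := by
    have h := congrArg (fun u : A →₀ T => u 0) hEw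
    rw [hewexp] at h
    simp only [Finsupp.add_apply, Finsupp.single_eq_same] at h
    rw [Finsupp.finset_sum_apply,
      Finset.sum_eq_zero (fun g hg => Finsupp.single_eq_of_ne' (hσGne0 g hg)), add_zero] at h
    rw [hw_at 0, if_pos rfl, if_neg hG0, add_zero] at h
    exact h
  have hτinvd₀ : E.τinv d₀ = d₀ := by
    have h := E.τinv_τ0 d₀
    rwa [hτ0d₀] at h
  have hfσ : ∀ a, f (E.σA hφ hd₀ a) = f a := by
    intro a
    have h := E.σA_spec hφ hd₀ a d₀
    rw [hτinvd₀] at h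
    exact h
  have hσG : ∀ g ∈ G, E.σA hφ hd₀ g = g := by
    intro g hg
    have h := congrArg (fun u : A →₀ T => u (E.σA hφ hd₀ g)) hEw
    rw [hewexp] at h
    simp only [Finsupp.add_apply] at h
    rw [Finsupp.finset_sum_apply] at h
    have hsingle0 : Finsupp.single (0 : A) (E.τ0 d₀) (E.σA hφ hd₀ g) = 0 :=
      Finsupp.single_eq_of_ne' (Ne.symm (hσGne0 g hg))
    have hsum : ∑ g' ∈ G, Finsupp.single (E.σA hφ hd₀ g') (E.τA hφ hd₀ g' d₀) (E.σA hφ hd₀ g)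
        = E.τA hφ hd₀ g d₀ := by
      rw [Finset.sum_eq_single_of_mem g hg]
      · exact Finsupp.single_eq_same
      · exact fun g' hg' hne => Finsupp.single_eq_of_ne' (fun hc => hne (hσinj g' g hc))
    rw [hsingle0, zero_add, hsum] at h
    have hne : w (E.σA hφ hd₀ g) ≠ 0 := by rw [← h]; exact hτgne g d₀ hd₀
    have hσgG : E.σA hφ hd₀ g ∈ G := by
      rw [hw_at _, if_neg (hσGne0 g hg), zero_add] at hne
      by_contra hterm
      rw [if_neg hterm] at hne
      exact hne rfl
    exact hfinjG _ hσgG g hg (hfσ g)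
  have hσid : ∀ a, E.σA hφ hd₀ a = a := by
    have hhom : ∀ x y : A, E.σA hφ hd₀ (x + y) = E.σA hφ hd₀ x + E.σA hφ hd₀ y :=
      fun x y => E.σA_add hφ hd₀ x y
    have hlin : (AddMonoidHom.mk' (E.σA hφ hd₀) hhom).toIntLinearMap = LinearMap.id := by
      refine b.ext fun i => ?_
      show E.σA hφ hd₀ (b i) = b i
      exact hσG (b i) (by simp [hGdef])
    intro a
    have h := LinearMap.congr_fun hlin a
    simpa using h
  have hτinvid : ∀ d : T, E.τinv d = d := by
    intro d
    have h2 : E.τinv d - d = 0 := hφ.2 _ fun a => by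
      rw [map_sub, AddMonoidHom.sub_apply]
      have h := E.σA_spec hφ hd₀ a d
      rw [hσid a] at h
      rw [← h, sub_self]
    exact sub_eq_zero.mp h2
  have hτ0id : ∀ d : T, E.τ0 d = d := fun d => by
    conv_lhs => rw [← hτinvid d]
    rw [E.τ0_τinv]
  have hτA0 : ∀ u : T, E.τA hφ hd₀ 0 u = u := fun u => by
    rw [E.τA_zero_eq_τ0, hτ0id]
  have hkey : ∀ (α β : A) (d d' : T),
      E.τA hφ hd₀ (α + β) (φ d β • d' - φ d' α • d)
        = φ (E.τA hφ hd₀ α d) β • E.τA hφ hd₀ β d'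
          - φ (E.τA hφ hd₀ β d') α • E.τA hφ hd₀ α d := by
    intro α β d d'
    have h := E.keyE hφ hd₀ α β d d'
    rwa [hσid α, hσid β] at h
  have hSpG : ∀ g ∈ G, E.τA hφ hd₀ g d₀ = d₀ := by
    intro g hg
    have h := congrArg (fun u : A →₀ T => u g) hEw
    rw [hewexp] at h
    simp only [Finsupp.add_apply] at h
    rw [Finsupp.finset_sum_apply] at h
    have hsingle0 : Finsupp.single (0 : A) (E.τ0 d₀) g = 0 :=
      Finsupp.single_eq_of_ne' (Ne.symm (hGne0 g hg))
    have hsum : ∑ g' ∈ G, Finsupp.single (E.σA hφ hd₀ g') (E.τA hφ hd₀ g' d₀) g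
        = E.τA hφ hd₀ g d₀ := by
      rw [Finset.sum_eq_single_of_mem g hg]
      · rw [hσid g]; exact Finsupp.single_eq_same
      · intro g' hg' hne
        rw [hσid g']
        exact Finsupp.single_eq_of_ne' hne
    rw [hsingle0, zero_add, hsum, hw_at g, if_neg (hGne0 g hg), if_pos hg, zero_add] at h
    exact h
  have ruleAdd : ∀ a a' : A, E.τA hφ hd₀ a d₀ = d₀ → E.τA hφ hd₀ a' d₀ = d₀ →
      f a ≠ f a' → E.τA hφ hd₀ (a + a') d₀ = d₀ := by
    intro a a' ha ha' hne
    have h := hkey a a' d₀ d₀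
    rw [ha, ha', hf a, hf a', ← sub_smul, E.τA_smul] at h
    have hc : f a' - f a ≠ 0 := sub_ne_zero.mpr (Ne.symm hne)
    have h2 := congrArg (fun u : T => (f a' - f a)⁻¹ • u) h
    simpa [smul_smul, inv_mul_cancel₀ hc] using h2
  have ruleNeg : ∀ a : A, E.τA hφ hd₀ a d₀ = d₀ → f a ≠ 0 →
      E.τA hφ hd₀ (-a) d₀ = d₀ := by
    intro a ha hfa
    have h := hkey a (-a) d₀ d₀
    rw [ha] at h
    rw [show a + -a = (0 : A) from by abel] at h
    rw [hτA0] at h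
    simp only [map_neg, neg_smul] at h
    have h2 := congrArg (fun u : T => φ u a) h
    simp only [map_sub, map_neg, map_smul, AddMonoidHom.sub_apply, AddMonoidHom.neg_apply,
      AddMonoidHom.smul_apply, smul_eq_mul] at h2
    have hX : φ (E.τA hφ hd₀ (-a) d₀) a = f a := by
      have h2fa : (2 : F) * f a ≠ 0 := mul_ne_zero two_ne_zero hfa
      apply mul_left_cancel₀ h2fa
      have hfaa : φ d₀ a = f a := hf a
      linear_combination h2
    rw [hX] at h
    have h3 := neg_inj.mp (sub_left_inj.mp h)
    have h4 := congrArg (fun u : T => (f a)⁻¹ • u) h3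
    have h5 : d₀ = E.τA hφ hd₀ (-a) d₀ := by
      simpa [hf, smul_smul, inv_mul_cancel₀ hfa] using h4
    exact h5.symm
  -- the coordinate-size induction
  have hrepr_sub : ∀ (a : A) (i : I) (k : ℤ) (j : I),
      b.repr (a - k • b i) j = b.repr a j - (if i = j then k else 0) := by
    intro a i k j
    rw [map_sub, map_smul, Module.Basis.repr_self, Finsupp.sub_apply, Finsupp.smul_apply,
      Finsupp.single_apply]
    simp [smul_eq_mul, mul_ite]
  have hNsub : ∀ (a : A) (i : I) (k : ℤ),
      (∑ j, (b.repr (a - k • b i) j).natAbs) + (b.repr a i).natAbs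
        = (∑ j, (b.repr a j).natAbs) + (b.repr a i - k).natAbs := by
    intro a i k
    rw [← Finset.sum_erase_add Finset.univ _ (Finset.mem_univ i),
      ← Finset.sum_erase_add Finset.univ (fun j => (b.repr a j).natAbs) (Finset.mem_univ i)]
    have h1 : ∀ j ∈ Finset.univ.erase i,
        (b.repr (a - k • b i) j).natAbs = (b.repr a j).natAbs := by
      intro j hj
      rw [hrepr_sub, if_neg (Ne.symm (Finset.mem_erase.mp hj).1)]
      simp
    rw [Finset.sum_congr rfl h1, hrepr_sub, if_pos rfl]
    omega
  have hSpε : ∀ (i' : I) (ε' : ℤ), ε' = 1 ∨ ε' = -1 →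
      E.τA hφ hd₀ (ε' • b i') d₀ = d₀ ∧ E.τA hφ hd₀ ((2 * ε') • b i') d₀ = d₀ := by
    intro i' ε' hε'
    have hb1 : E.τA hφ hd₀ (b i') d₀ = d₀ := hSpG _ (by simp [hGdef])
    have hb2 : E.τA hφ hd₀ ((2 : ℤ) • b i') d₀ = d₀ := hSpG _ (by
      simp only [hGdef, Finset.mem_union, Finset.mem_image, Finset.mem_univ, true_and]
      exact Or.inr ⟨i', rfl⟩)
    rcases hε' with rfl | rfl
    · refine ⟨by simpa using hb1, by norm_num; exact hb2⟩
    · constructor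
      · rw [show (-1 : ℤ) • b i' = -(b i') from by simp]
        exact ruleNeg _ hb1 (hfb i')
      · rw [show (2 * (-1) : ℤ) • b i' = -((2:ℤ) • b i') from by
          rw [show (2 * (-1) : ℤ) = -2 from by norm_num, neg_smul]]
        refine ruleNeg _ hb2 ?_
        rw [hf2 i']
        exact mul_ne_zero two_ne_zero (hfb i')
  have hSall : ∀ (n : ℕ) (a : A), (∑ j, (b.repr a j).natAbs) = n →
      E.τA hφ hd₀ a d₀ = d₀ := by
    intro n
    induction n using Nat.strong_induction_on with
    | _ n ih =>
      intro a hNa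
      rcases Nat.eq_zero_or_pos n with rfl | hn
      · have ha : a = 0 := by
          apply b.repr.injective
          ext j
          have hj : (b.repr a j).natAbs = 0 :=
            Nat.eq_zero_of_le_zero (hNa ▸ Finset.single_le_sum
              (f := fun j => (b.repr a j).natAbs) (fun _ _ => Nat.zero_le _) (Finset.mem_univ j))
          simpa using Int.natAbs_eq_zero.mp hj
        rw [ha]
        exact hτA0 d₀
      · obtain ⟨i, hi⟩ : ∃ i, b.repr a i ≠ 0 := by
          by_contra hc
          push_neg at hc
          rw [Finset.sum_eq_zero (fun j _ => by rw [hc j]; simp)] at hNa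
          omega
        set ε : ℤ := if 0 < b.repr a i then 1 else -1 with hε
        have hεcases : ε = 1 ∨ ε = -1 := by rw [hε]; split_ifs <;> simp
        have hεF : (ε : F) ≠ 0 := by rcases hεcases with h | h <;> rw [h] <;> norm_num
        have hs1N : (∑ j, (b.repr (a - ε • b i) j).natAbs) < n := by
          have h0 := hNsub a i ε
          have h1 : (b.repr a i - ε).natAbs < (b.repr a i).natAbs := by
            rw [hε]; split_ifs with h <;> omega
          omega
        have hs1 : E.τA hφ hd₀ (a - ε • b i) d₀ = d₀ := ih _ hs1N _ rfl
        by_cases hc1 : f (a - ε • b i) ≠ f (ε • b i)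
        · have h := ruleAdd _ _ hs1 ((hSpε i ε hεcases).1) hc1
          rwa [sub_add_cancel] at h
        · push_neg at hc1
          have hfa2 : f a = 2 * (ε : F) * f (b i) := by
            have hv : f (a - ε • b i) = f a - f (ε • b i) := map_sub (φ d₀) _ _
            rw [hv, hfzsmul] at hc1
            linear_combination hc1
          by_cases h2 : 2 ≤ (b.repr a i).natAbs
          · have hs2N : (∑ j, (b.repr (a - (2 * ε) • b i) j).natAbs) < n := by
              have h0 := hNsub a i (2 * ε)
              have h1 : (b.repr a i - 2 * ε).natAbs < (b.repr a i).natAbs := by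
                rw [hε]; split_ifs with h <;> omega
              omega
            have hs2 : E.τA hφ hd₀ (a - (2 * ε) • b i) d₀ = d₀ := ih _ hs2N _ rfl
            have hcond : f (a - (2 * ε) • b i) ≠ f ((2 * ε) • b i) := by
              have hv : f (a - (2 * ε) • b i) = f a - f ((2 * ε) • b i) := map_sub (φ d₀) _ _
              rw [hv, hfzsmul, hfa2]
              intro hcc
              push_cast at hcc
              have hzero : ((2 : F) * (ε : F)) * f (b i) = 0 := by linear_combination -hcc
              exact (mul_ne_zero (mul_ne_zero two_ne_zero hεF) (hfb i)) hzero
            have h := ruleAdd _ _ hs2 ((hSpε i ε hεcases).2) hcond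
            rwa [sub_add_cancel] at h
          · by_cases hj : ∃ j, j ≠ i ∧ b.repr a j ≠ 0
            · obtain ⟨j, hji, hjz⟩ := hj
              set δ : ℤ := if 0 < b.repr a j then 1 else -1 with hδ
              have hδcases : δ = 1 ∨ δ = -1 := by rw [hδ]; split_ifs <;> simp
              have hs1'N : (∑ j', (b.repr (a - δ • b j) j').natAbs) < n := by
                have h0 := hNsub a j δ
                have h1 : (b.repr a j - δ).natAbs < (b.repr a j).natAbs := by
                  rw [hδ]; split_ifs with h <;> omega
                omega
              have hs1' : E.τA hφ hd₀ (a - δ • b j) d₀ = d₀ := ih _ hs1'N _ rfl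
              by_cases hc2 : f (a - δ • b j) ≠ f (δ • b j)
              · have h := ruleAdd _ _ hs1' ((hSpε j δ hδcases).1) hc2
                rwa [sub_add_cancel] at h
              · push_neg at hc2
                exfalso
                have hfa2' : f a = 2 * (δ : F) * f (b j) := by
                  have hv : f (a - δ • b j) = f a - f (δ • b j) := map_sub (φ d₀) _ _
                  rw [hv, hfzsmul] at hc2
                  linear_combination hc2
                have heq : 2 * (ε : F) * f (b i) = 2 * (δ : F) * f (b j) := by
                  rw [← hfa2, hfa2']
                have hij : i ≠ j := Ne.symm hji
                rcases hεcases with hε1 | hε1 <;> rcases hδcases with hδ1 | hδ1 <;>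
                    rw [hε1, hδ1] at heq <;> push_cast at heq
                · exact (hf_pair i j hij).1 (by linear_combination heq / 2)
                · exact (hf_pair i j hij).2.1 (by linear_combination heq / 2)
                · exact (hf_pair i j hij).2.1 (by linear_combination -heq / 2)
                · exact (hf_pair i j hij).1 (by linear_combination -heq / 2)
            · push_neg at hj
              have hz1 : b.repr a i = ε := by rw [hε]; split_ifs <;> omega
              have ha : a = ε • b i := by
                apply b.repr.injective
                ext j'
                rw [map_smul, Module.Basis.repr_self, Finsupp.smul_apply, Finsupp.single_apply]
                rcases eq_or_ne i j' with rfl | hne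
                · rw [if_pos rfl, hz1]
                  simp
                · rw [if_neg hne]
                  have hj0 : b.repr a j' = 0 := hj j' (Ne.symm hne)
                  simp [hj0]
              rw [ha]
              exact (hSpε i ε hεcases).1
  have hSpAll : ∀ a : A, E.τA hφ hd₀ a d₀ = d₀ := fun a => hSall _ a rfl
  have hMraw : ∀ (α β : A) (d' : T),
      φ d₀ β • E.τA hφ hd₀ (α + β) d' - φ d' α • d₀
        = φ d₀ β • E.τA hφ hd₀ β d' - φ (E.τA hφ hd₀ β d') α • d₀ := by
    intro α β d'
    have h := hkey α β d₀ d'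
    rw [hSpAll α, E.τA_sub, E.τA_smul, E.τA_smul, hSpAll (α + β)] at h
    exact h
  have hc₀ : f (b i₀) ≠ 0 := hfb i₀
  have hstep1 : ∀ d' : T, E.τA hφ hd₀ (b i₀) d' = d' := by
    intro d'
    have h := hMraw (-(b i₀)) (b i₀) d'
    rw [show -(b i₀) + b i₀ = (0 : A) from by abel, hτA0 d'] at h
    simp only [map_neg, neg_smul, sub_neg_eq_add] at h
    have h2 := congrArg (evφ φ (b i₀)) h
    simp only [map_add, map_smul, evφ_apply, smul_eq_mul] at h2
    have hXY : φ d' (b i₀) = φ (E.τA hφ hd₀ (b i₀) d') (b i₀) := by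
      have h2c : (2 : F) * f (b i₀) ≠ 0 := mul_ne_zero two_ne_zero hc₀
      apply mul_left_cancel₀ h2c
      linear_combination h2
    rw [← hXY] at h
    have h3 : φ d₀ (b i₀) • d' = φ d₀ (b i₀) • E.τA hφ hd₀ (b i₀) d' :=
      add_right_cancel h
    have h4 := congrArg (fun u : T => (f (b i₀))⁻¹ • u) h3
    have h5 : d' = E.τA hφ hd₀ (b i₀) d' := by
      simpa [hf, smul_smul, inv_mul_cancel₀ hc₀] using h4
    exact h5.symm
  have hstep2 : ∀ (γ : A) (d' : T), E.τA hφ hd₀ γ d' = d' := by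
    intro γ d'
    have h := hMraw (γ - b i₀) (b i₀) d'
    rw [sub_add_cancel, hstep1 d'] at h
    have h3 : φ d₀ (b i₀) • E.τA hφ hd₀ γ d' = φ d₀ (b i₀) • d' := sub_left_inj.mp h
    have h4 := congrArg (fun u : T => (f (b i₀))⁻¹ • u) h3
    simpa [hf, smul_smul, inv_mul_cancel₀ hc₀] using h4
  intro v
  conv_rhs => rw [← Finsupp.sum_single v]
  rw [show (Finsupp.sum v Finsupp.single) = ∑ a ∈ v.support, Finsupp.single a (v a) from rfl]
  conv_lhs => rw [← Finsupp.sum_single v,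
    show (Finsupp.sum v Finsupp.single) = ∑ a ∈ v.support, Finsupp.single a (v a) from rfl]
  rw [map_sum]
  exact Finset.sum_congr rfl fun a _ => by rw [E.e_single' hφ hd₀, hσid a, hstep2 a (v a)]



lemma adIter_map (e : (A →₀ T) ≃ₗ[F] (A →₀ T))
    (hmap : ∀ a b, e (brk φ a b) = brk φ (e a) (e b)) (x y : A →₀ T) (k : ℕ) :
    e (adIter φ x y k) = adIter φ (e x) (e y) k := by
  induction k with
  | zero => rfl
  | succ k ih =>
    show e (brk φ x (adIter φ x y k)) = brk φ (e x) (adIter φ (e x) (e y) k)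
    rw [hmap, ih]

lemma isLF_map (e : (A →₀ T) ≃ₗ[F] (A →₀ T))
    (hmap : ∀ a b, e (brk φ a b) = brk φ (e a) (e b)) (x : A →₀ T) (h : IsLF φ x) :
    IsLF φ (e x) := by
  intro y
  obtain ⟨V, hFG, hV⟩ := h (e.symm y)
  refine ⟨V.map (e : (A →₀ T) →ₗ[F] (A →₀ T)), hFG.map _, fun k => ?_⟩
  have h2 := adIter_map φ e hmap x (e.symm y) k
  rw [e.apply_symm_apply] at h2
  rw [← h2]
  exact Submodule.mem_map_of_mem (hV k)

lemma e_preserves_W0 [AddGroup.FG A] (hφ : Nondeg φ)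
    (e : (A →₀ T) ≃ₗ[F] (A →₀ T))
    (hmap : ∀ a b, e (brk φ a b) = brk φ (e a) (e b)) (d : T) :
    ∃ d', e (Finsupp.single 0 d) = Finsupp.single 0 d' := by
  have hLF : IsLF φ (e (Finsupp.single 0 d)) :=
    isLF_map φ e hmap _ (isLF_single_zero φ d)
  refine ⟨(e (Finsupp.single 0 d)) 0, ?_⟩
  ext a
  rcases eq_or_ne a 0 with rfl | ha
  · rw [Finsupp.single_eq_same]
  · rw [Finsupp.single_eq_of_ne' (Ne.symm ha)]
    by_contra hz
    exact not_isLF φ hφ _ (Finsupp.mem_support_iff.mpr hz) ha hLF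

/-- Build an `AutData` from a bracket-preserving linear automorphism. -/
noncomputable def mkAutData [AddGroup.FG A] (hφ : Nondeg φ)
    (e : (A →₀ T) ≃ₗ[F] (A →₀ T))
    (hmap : ∀ a b, e (brk φ a b) = brk φ (e a) (e b)) : AutData φ where
  e := e
  hmap := hmap
  h0 := e_preserves_W0 φ hφ e hmap
  h0' := e_preserves_W0 φ hφ e.symm (fun a b => by
    apply e.injective
    rw [hmap, e.apply_symm_apply, e.apply_symm_apply, e.apply_symm_apply])

end Aux

end GW

/-- Corollary 3.5(a): if `A` is finitely generated, then every `2`-local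
automorphism of the simple generalized Witt algebra `W(A,T,φ)` (no invertibility
assumed) is an automorphism. -/
theorem GW.twoLocalAut_is_aut_of_fg
    {F : Type*} [Field F] [CharZero F]
    {A : Type*} [AddCommGroup A] [AddGroup.FG A]
    {T : Type*} [AddCommGroup T] [Module F T]
    (φ : T →ₗ[F] (A →+ F))
    (hA : Nontrivial A) (hφ : GW.Nondeg φ)
    (Φ : GW.W F A T φ → GW.W F A T φ)
    (h2loc : ∀ x y : GW.W F A T φ,
      ∃ θ : GW.W F A T φ ≃ₗ⁅F⁆ GW.W F A T φ, Φ x = θ x ∧ Φ y = θ y) :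
    ∃ θ : GW.W F A T φ ≃ₗ⁅F⁆ GW.W F A T φ, ⇑θ = Φ := by
  classical
  obtain ⟨w, hw⟩ := GW.exists_w φ hφ hA
  have rigid : ∀ θ : GW.W F A T φ ≃ₗ⁅F⁆ GW.W F A T φ, θ w = w →
      ∀ v : GW.W F A T φ, θ v = v := by
    intro θ hθw v
    have hmap : ∀ a b : A →₀ T, θ.toLinearEquiv (brk φ a b)
        = brk φ (θ.toLinearEquiv a) (θ.toLinearEquiv b) := by
      intro a b
      exact θ.toLieHom.map_lie a b
    have hEw : (GW.mkAutData φ hφ θ.toLinearEquiv hmap).e w = w := hθw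
    exact hw (GW.mkAutData φ hφ θ.toLinearEquiv hmap) hEw v
  obtain ⟨θ₀, hθ₀w, -⟩ := h2loc w w
  refine ⟨θ₀, funext fun y => ?_⟩
  obtain ⟨θy, hyw, hyy⟩ := h2loc w y
  have hcomp : (θy.trans θ₀.symm) w = w := by
    show θ₀.symm (θy w) = w
    rw [← hyw, hθ₀w]
    exact θ₀.symm_apply_apply w
  have h := rigid (θy.trans θ₀.symm) hcomp y
  have h2 : θy y = θ₀ y := by
    have h3 : θ₀ (θ₀.symm (θy y)) = θ₀ y := congrArg θ₀ h
    rwa [θ₀.apply_symm_apply] at h3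
  show θ₀ y = Φ y
  rw [hyy, h2]
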